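/- In ℤ[[u]] one has the following identities for the specializations at q = 1: (1-u²)·P₀(1,u) = 1; (1-u)·P₁(1,u) = u; (1-u²)·P₂(1,u) = u; (1-u)(1-u²)·P₃(1,u) = u²; (1-u)(1-u²)·P₄(1,u) = u²; and (1-u)(1-u²)·P₅(1,u) = u³. -/

import Mathlib

open scoped PowerSeries

/-- The polynomials `p_{s,r}(q) ∈ ℤ[q]` (the graded multiplicities
`[D(2,sω) : D(3,rω)]_q`): `p_{0,0} = p_{1,1} = p_{2,2} = 1`; `p_{s,r} = 0` whenever
`r > s`, or `s - r` is odd, or `s ≤ 2` and `(s,r) ∉ {(0,0),(1,1),(2,2)}`; and for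
`s ≥ 3` with `r ≤ s` and `s - r` even, writing `s = 2s₁ + s₀` with `s₀ ∈ {0,1}`,
`p_{s,r} = q^{(s-r)/2} p_{s-3,r-3} + q^{(s₁+s₀-1)(2-s₀)} p_{s-4+2s₀,r}` if `r ≥ 3`, and
`p_{s,r} = q^{(s₁+s₀-1)(2-s₀)} p_{s-4+2s₀,r}` if `0 ≤ r ≤ 2`. -/
noncomputable def pp : ℕ → ℕ → Polynomial ℤ
  | 0, r => if r = 0 then 1 else 0
  | 1, r => if r = 1 then 1 else 0
  | 2, r => if r = 2 then 1 else 0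
  | (s + 3), r =>
    if (s + 3) < r ∨ (s + 3) % 2 ≠ r % 2 then 0
    else
      (if 3 ≤ r then Polynomial.X ^ (((s + 3) - r) / 2) * pp s (r - 3) else 0)
        + Polynomial.X ^ (((s + 3) / 2 + (s + 3) % 2 - 1) * (2 - (s + 3) % 2))
            * pp ((s + 3) + 2 * ((s + 3) % 2) - 4) r
  termination_by s _ => s
  decreasing_by
  · omega
  · omega

lemma pp_zero (s r : ℕ) (h : 3 ≤ s) (hz : s < r ∨ s % 2 ≠ r % 2) : pp s r = 0 := by
  obtain ⟨k, rfl⟩ : ∃ k, s = k + 3 := ⟨s - 3, by omega⟩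
  rw [pp, if_pos hz]

lemma pp_step (s r : ℕ) (h : 3 ≤ s) (hp : s % 2 = r % 2) (hle : r ≤ s) :
    (pp s r).eval 1 =
      (if 3 ≤ r then (pp (s-3) (r-3)).eval 1 else 0)
        + (pp (s + 2*(s % 2) - 4) r).eval 1 := by
  obtain ⟨k, rfl⟩ : ∃ k, s = k + 3 := ⟨s - 3, by omega⟩
  rw [pp, if_neg (by omega)]
  split_ifs <;> simp

lemma e0 : ∀ n, (pp (2*n) 0).eval 1 = if n % 2 = 0 then 1 else 0 := by
  intro n
  induction n using Nat.strong_induction_on with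
  | _ n ih =>
    obtain _|_|n := n
    · simp [pp]
    · norm_num [pp]
    · rw [pp_step _ _ (by omega) (by omega) (by omega), if_neg (by omega)]
      have h : 2*(n+2) + 2*(2*(n+2) % 2) - 4 = 2*n := by omega
      rw [h, ih n (by omega)]
      split_ifs <;> omega

lemma e1 : ∀ n, (pp (2*n+1) 1).eval 1 = 1 := by
  intro n
  induction n using Nat.strong_induction_on with
  | _ n ih =>
    obtain _|n := n
    · norm_num [pp]
    · rw [pp_step _ _ (by omega) (by omega) (by omega), if_neg (by omega)]
      have h : 2*(n+1)+1 + 2*((2*(n+1)+1) % 2) - 4 = 2*n+1 := by omega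
      rw [h, ih n (by omega)]
      norm_num

lemma e2 : ∀ n, (pp (2*n) 2).eval 1 = if n % 2 = 1 then 1 else 0 := by
  intro n
  induction n using Nat.strong_induction_on with
  | _ n ih =>
    obtain _|_|n := n
    · norm_num [pp]
    · norm_num [pp]
    · rw [pp_step _ _ (by omega) (by omega) (by omega), if_neg (by omega)]
      have h : 2*(n+2) + 2*(2*(n+2) % 2) - 4 = 2*n := by omega
      rw [h, ih n (by omega)]
      split_ifs <;> omega

lemma e3 : ∀ n, (pp (2*n+1) 3).eval 1 = ((n+1)/2 : ℕ) := by
  intro n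
  induction n using Nat.strong_induction_on with
  | _ n ih =>
    obtain _|n := n
    · norm_num [pp]
    · rw [pp_step _ _ (by omega) (by omega) (by omega), if_pos (by omega)]
      have h : 2*(n+1)+1 + 2*((2*(n+1)+1) % 2) - 4 = 2*n+1 := by omega
      have h2 : 2*(n+1)+1 - 3 = 2*n := by omega
      rw [h, h2, ih n (by omega)]
      show (pp (2*n) 0).eval 1 + _ = _
      rw [e0 n]
      split_ifs <;> push_cast <;> omega

lemma e4 : ∀ n, (pp (2*n) 4).eval 1 = (n/2 : ℕ) := by
  intro n
  induction n using Nat.strong_induction_on with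
  | _ n ih =>
    obtain _|_|n := n
    · norm_num [pp]
    · norm_num [pp]
    · rw [pp_step _ _ (by omega) (by omega) (by omega), if_pos (by omega)]
      have h : 2*(n+2) + 2*(2*(n+2) % 2) - 4 = 2*n := by omega
      have h2 : 2*(n+2) - 3 = 2*n+1 := by omega
      rw [h, h2, ih n (by omega)]
      show (pp (2*n+1) 1).eval 1 + _ = _
      rw [e1 n]
      push_cast; omega

lemma e5 : ∀ n, (pp (2*n+1) 5).eval 1 = (n/2 : ℕ) := by
  intro n
  induction n using Nat.strong_induction_on with
  | _ n ih =>
    obtain _|_|n := n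
    · norm_num [pp]
    · rw [pp_zero 3 5 (by omega) (by omega)]; norm_num
    · rw [pp_step _ _ (by omega) (by omega) (by omega), if_pos (by omega)]
      have h : 2*(n+2)+1 + 2*((2*(n+2)+1) % 2) - 4 = 2*(n+1)+1 := by omega
      have h2 : 2*(n+2)+1 - 3 = 2*(n+1) := by omega
      rw [h, h2, ih (n+1) (by omega)]
      show (pp (2*(n+1)) 2).eval 1 + _ = _
      rw [e2 (n+1)]
      split_ifs <;> push_cast <;> omega

/-- The generating series `P_m(q,u)`: for `m` even, `P_m(q,u) = Σ_{s≥0} p_{2s,m} u^s`;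
for `m` odd, `P_m(q,u) = Σ_{s≥0} p_{2s+1,m} u^{s+1}`.  A formal power series in `u` with
coefficients in `ℤ[q]`. -/
noncomputable def Pser (m : ℕ) : PowerSeries (Polynomial ℤ) :=
  PowerSeries.mk fun n =>
    if m % 2 = 0 then pp (2 * n) m else if n = 0 then 0 else pp (2 * n - 1) m

/-- `thetaSubst a c` is the substituted partial theta series `Θ(a, c·u²) ∈ ℤ[q]⟦u⟧`,
i.e. `Σ_{s≥0} a^{s²} c^s u^{2s}`, where `Θ(q,u) = Σ_{s≥0} q^{s²}u^s`. -/
noncomputable def thetaSubst (a c : Polynomial ℤ) : PowerSeries (Polynomial ℤ) :=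
  PowerSeries.mk fun n => if n % 2 = 0 then a ^ ((n / 2) ^ 2) * c ^ (n / 2) else 0

/-- `P_m(1,u) ∈ ℤ⟦u⟧`, obtained from `P_m(q,u)` by evaluating each coefficient at
`q = 1`. -/
noncomputable def Pone (m : ℕ) : PowerSeries ℤ :=
  PowerSeries.map (Polynomial.evalRingHom (1 : ℤ)) (Pser m)

lemma coeff_Pone (m n : ℕ) :
    PowerSeries.coeff n (Pone m) =
      (if m % 2 = 0 then pp (2 * n) m else if n = 0 then 0 else pp (2 * n - 1) m).eval 1 := by
  simp [Pone, Pser, PowerSeries.coeff_map]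

lemma c0 (n : ℕ) : PowerSeries.coeff n (Pone 0) = if n % 2 = 0 then 1 else 0 := by
  rw [coeff_Pone, if_pos (by norm_num), e0]

lemma c1 (n : ℕ) : PowerSeries.coeff n (Pone 1) = if n = 0 then 0 else 1 := by
  rw [coeff_Pone, if_neg (by norm_num)]
  obtain _|n := n
  · simp
  · rw [if_neg (by omega), if_neg (by omega)]
    have h : 2*(n+1) - 1 = 2*n+1 := by omega
    rw [h, e1]

lemma c2 (n : ℕ) : PowerSeries.coeff n (Pone 2) = if n % 2 = 1 then 1 else 0 := by
  rw [coeff_Pone, if_pos (by norm_num), e2]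

lemma c3 (n : ℕ) : PowerSeries.coeff n (Pone 3) = ((n/2 : ℕ) : ℤ) := by
  rw [coeff_Pone, if_neg (by norm_num)]
  obtain _|n := n
  · simp
  · rw [if_neg (by omega)]
    have h : 2*(n+1) - 1 = 2*n+1 := by omega
    rw [h, e3]

lemma c4 (n : ℕ) : PowerSeries.coeff n (Pone 4) = ((n/2 : ℕ) : ℤ) := by
  rw [coeff_Pone, if_pos (by norm_num), e4]

lemma c5 (n : ℕ) : PowerSeries.coeff n (Pone 5) = (((n-1)/2 : ℕ) : ℤ) := by
  rw [coeff_Pone, if_neg (by norm_num)]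
  obtain _|n := n
  · simp
  · rw [if_neg (by omega)]
    have h : 2*(n+1) - 1 = 2*n+1 := by omega
    rw [h, e5]
    congr 1

lemma coeff_two_factors (P : PowerSeries ℤ) (n : ℕ) :
    PowerSeries.coeff n ((1 - PowerSeries.X) * (1 - PowerSeries.X ^ 2) * P) =
      PowerSeries.coeff n P - (if 1 ≤ n then PowerSeries.coeff (n-1) P else 0)
        - (if 2 ≤ n then PowerSeries.coeff (n-2) P else 0)
        + (if 3 ≤ n then PowerSeries.coeff (n-3) P else 0) := by
  have h : (1 - PowerSeries.X) * (1 - PowerSeries.X ^ 2) * P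
      = P - PowerSeries.X ^ 1 * P - PowerSeries.X ^ 2 * P + PowerSeries.X ^ 3 * P := by ring
  rw [h, map_add, map_sub, map_sub, PowerSeries.coeff_X_pow_mul',
    PowerSeries.coeff_X_pow_mul', PowerSeries.coeff_X_pow_mul']

lemma coeff_one_factor (k : ℕ) (P : PowerSeries ℤ) (n : ℕ) :
    PowerSeries.coeff n ((1 - PowerSeries.X ^ k) * P) =
      PowerSeries.coeff n P - (if k ≤ n then PowerSeries.coeff (n-k) P else 0) := by
  rw [sub_mul, one_mul, map_sub, PowerSeries.coeff_X_pow_mul']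

/-- In `ℤ⟦u⟧`: `(1-u²)·P₀(1,u) = 1`; `(1-u)·P₁(1,u) = u`;
`(1-u²)·P₂(1,u) = u`; `(1-u)(1-u²)·P₃(1,u) = u²`; `(1-u)(1-u²)·P₄(1,u) = u²`;
`(1-u)(1-u²)·P₅(1,u) = u³`. -/
theorem stmt17 :
    (1 - PowerSeries.X ^ 2) * Pone 0 = 1 ∧
    (1 - PowerSeries.X) * Pone 1 = PowerSeries.X ∧
    (1 - PowerSeries.X ^ 2) * Pone 2 = PowerSeries.X ∧
    (1 - PowerSeries.X) * (1 - PowerSeries.X ^ 2) * Pone 3 = PowerSeries.X ^ 2 ∧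
    (1 - PowerSeries.X) * (1 - PowerSeries.X ^ 2) * Pone 4 = PowerSeries.X ^ 2 ∧
    (1 - PowerSeries.X) * (1 - PowerSeries.X ^ 2) * Pone 5 = PowerSeries.X ^ 3 := by
  refine ⟨?_, ?_, ?_, ?_, ?_, ?_⟩
  · ext n
    rw [coeff_one_factor, c0, c0, PowerSeries.coeff_one]
    split_ifs <;> omega
  · ext n
    have h : (1 - PowerSeries.X) * Pone 1 = (1 - PowerSeries.X ^ 1) * Pone 1 := by ring
    rw [h, coeff_one_factor, c1, c1, PowerSeries.coeff_X]
    split_ifs <;> omega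
  · ext n
    rw [coeff_one_factor, c2, c2, PowerSeries.coeff_X]
    split_ifs <;> omega
  · ext n
    rw [coeff_two_factors, c3, c3, c3, c3, PowerSeries.coeff_X_pow]
    split_ifs <;> push_cast <;> omega
  · ext n
    rw [coeff_two_factors, c4, c4, c4, c4, PowerSeries.coeff_X_pow]
    split_ifs <;> push_cast <;> omega
  · ext n
    rw [coeff_two_factors, c5, c5, c5, c5, PowerSeries.coeff_X_pow]
    split_ifs <;> push_cast <;> omega
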